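/- With the setup of a measurable space K, a measurable family of probability measures p_x*p_y defining convolution of finite measures, and a measurable subset H closed under convolution: for finite nonnegative measures μ, ν on K with μ concentrated on H, the total variation of the difference (μ*ν)|_H − (μ|_H)*(ν|_H) is at most ∫_H ν(ỹH ∩ H^c) dμ(y), where ỹH := {z ∈ K : (p_y*p_z)(H) > 0}. -/

import Mathlib

open MeasureTheory
open scoped ENNReal

/-- Convolution of finite measures induced by a family of probability measures `p x y`. -/
noncomputable def conv {K : Type*} [MeasurableSpace K] (p : K → K → Measure K)
    (μ ν : Measure K) : Measure K :=
  μ.bind fun x => ν.bind fun y => p x y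

/-- The induced convolution on `H`, restricting the measures `p x y` to `H`. -/
noncomputable def convH {K : Type*} [MeasurableSpace K] (p : K → K → Measure K) (H : Set K)
    (lam sigma : Measure H) : Measure H :=
  lam.bind fun x => sigma.bind fun y =>
    Measure.comap (fun z : H => (z : K)) (p (x : K) (y : K))

/-- For `μ` a finite nonnegative measure concentrated on `H` and `ν` a finite nonnegative
measure on `K`, the total variation of `(μ*ν)|_H − (μ|_H)*(ν|_H)` is at most
`∫_H ν(ỹH ∩ H^c) dμ(y)`, where `ỹH = {z : (p y z)(H) > 0}`.  (The total variation of the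
difference of measures `L − R` is expressed as `sup over measurable B, C` of
`(L(B) − R(B)) − (L(C) − R(C))`.) -/
theorem tv_restrict_conv_sub_conv_restrict_le
    {K : Type*} [MeasurableSpace K] (p : K → K → Measure K)
    (hp : ∀ x y, IsProbabilityMeasure (p x y))
    (hpm : ∀ B : Set K, MeasurableSet B → Measurable fun z : K × K => p z.1 z.2 B)
    {H : Set K} (hH : MeasurableSet H)
    (hclosed : ∀ x ∈ H, ∀ y ∈ H, p x y Hᶜ = 0)
    (htilde : ∀ y : K, MeasurableSet {z : K | 0 < p y z H})
    (μ ν : Measure K) [IsFiniteMeasure μ] [IsFiniteMeasure ν] (hμH : μ Hᶜ = 0) :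
    ∀ B C : Set H, MeasurableSet B → MeasurableSet C →
      (((Measure.comap (fun y : H => (y : K)) (conv p μ ν)) B).toReal
          - ((convH p H (Measure.comap (fun y : H => (y : K)) μ)
              (Measure.comap (fun y : H => (y : K)) ν)) B).toReal)
        - (((Measure.comap (fun y : H => (y : K)) (conv p μ ν)) C).toReal
          - ((convH p H (Measure.comap (fun y : H => (y : K)) μ)
              (Measure.comap (fun y : H => (y : K)) ν)) C).toReal)
      ≤ ∫ y in H, (ν ({z : K | 0 < p y z H} ∩ Hᶜ)).toReal ∂μ := by
  intro B C hB hC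
  have emb : MeasurableEmbedding (fun y : H => (y : K)) := MeasurableEmbedding.subtype_coe hH
  set e : H → K := fun y : H => (y : K) with he
  have hrange : Set.range e = H := Subtype.range_coe
  -- measurability of the measure-valued maps
  have hpmeas : ∀ x : K, Measurable (p x) := fun x =>
    Measure.measurable_of_measurable_coe _ fun s hs => (hpm s hs).comp measurable_prodMk_left
  haveI : IsFiniteMeasure (Measure.comap e ν) := by
    constructor
    rw [emb.comap_apply]
    exact measure_lt_top ν _
  haveI : IsFiniteMeasure (Measure.comap e μ) := by
    constructor
    rw [emb.comap_apply]
    exact measure_lt_top μ _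
  -- conversion of lintegrals along the comap
  have cvt : ∀ (ρ : Measure K) (g : K → ℝ≥0∞), Measurable g →
      ∫⁻ h, g (e h) ∂(Measure.comap e ρ) = ∫⁻ y in H, g y ∂ρ := by
    intro ρ g hg
    calc ∫⁻ h, g (e h) ∂(Measure.comap e ρ)
        = ∫⁻ y, g y ∂((Measure.comap e ρ).map e) := (lintegral_map hg emb.measurable).symm
      _ = ∫⁻ y in H, g y ∂ρ := by rw [emb.map_comap, hrange]
  -- the full convolution evaluated on a measurable set
  have hmeasouter : Measurable fun x => ν.bind (p x) := by
    apply Measure.measurable_of_measurable_coe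
    intro s hs
    have h1 : (fun x => ν.bind (p x) s) = fun x => ∫⁻ y, p x y s ∂ν :=
      funext fun x => Measure.bind_apply hs (hpmeas x).aemeasurable
    rw [h1]
    exact Measurable.lintegral_prod_right (hpm s hs)
  have hconv : ∀ s : Set K, MeasurableSet s →
      conv p μ ν s = ∫⁻ x, ∫⁻ y, p x y s ∂ν ∂μ := by
    intro s hs
    rw [conv, Measure.bind_apply hs hmeasouter.aemeasurable]
    exact lintegral_congr fun x => Measure.bind_apply hs (hpmeas x).aemeasurable
  -- the convolution on H evaluated on a measurable set
  have hinner_meas : ∀ x : K, Measurable fun y : H => Measure.comap e (p x (e y)) := by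
    intro x
    apply Measure.measurable_of_measurable_coe
    intro s hs
    have h1 : (fun y : H => Measure.comap e (p x (e y)) s) = fun y : H => p x (e y) (e '' s) :=
      funext fun y => emb.comap_apply _ _
    rw [h1]
    exact (hpm (e '' s) (emb.measurableSet_image' hs)).comp
      (measurable_const.prodMk emb.measurable)
  have houter_meas : Measurable fun x : H =>
      (Measure.comap e ν).bind fun y : H => Measure.comap e (p (e x) (e y)) := by
    apply Measure.measurable_of_measurable_coe
    intro s hs
    have h1 : (fun x : H => ((Measure.comap e ν).bind fun y : H =>
        Measure.comap e (p (e x) (e y))) s)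
        = fun x : H => ∫⁻ y : H, p (e x) (e y) (e '' s) ∂(Measure.comap e ν) := by
      funext x
      rw [Measure.bind_apply hs (hinner_meas (e x)).aemeasurable]
      exact lintegral_congr fun y => emb.comap_apply _ _
    rw [h1]
    have h2 : Measurable fun x : K => ∫⁻ y : H, p x (e y) (e '' s) ∂(Measure.comap e ν) := by
      apply Measurable.lintegral_prod_right
      exact (hpm (e '' s) (emb.measurableSet_image' hs)).comp
        (measurable_fst.prodMk (emb.measurable.comp measurable_snd))
    exact h2.comp emb.measurable
  have hpmA : ∀ (Ak : Set K), MeasurableSet Ak →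
      Measurable fun x : K => ∫⁻ y in H, p x y Ak ∂ν := by
    intro Ak hAk
    exact Measurable.lintegral_prod_right (hpm Ak hAk)
  have hconvH : ∀ (A : Set H), MeasurableSet A →
      convH p H (Measure.comap e μ) (Measure.comap e ν) A
        = ∫⁻ x in H, ∫⁻ y in H, p x y (e '' A) ∂ν ∂μ := by
    intro A hA
    have hAk : MeasurableSet (e '' A) := emb.measurableSet_image' hA
    rw [convH, Measure.bind_apply hA houter_meas.aemeasurable]
    have step1 : ∀ x : H, ((Measure.comap e ν).bind fun y : H =>
        Measure.comap e (p (e x) (e y))) A = ∫⁻ y in H, p (e x) y (e '' A) ∂ν := by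
      intro x
      rw [Measure.bind_apply hA (hinner_meas (e x)).aemeasurable]
      have h1 : ∫⁻ y : H, (Measure.comap e (p (e x) (e y))) A ∂(Measure.comap e ν)
          = ∫⁻ y : H, p (e x) (e y) (e '' A) ∂(Measure.comap e ν) :=
        lintegral_congr fun y => emb.comap_apply _ _
      rw [h1]
      exact cvt ν (fun y => p (e x) y (e '' A))
        ((hpm (e '' A) hAk).comp measurable_prodMk_left)
    calc ∫⁻ x : H, ((Measure.comap e ν).bind fun y : H =>
          Measure.comap e (p (e x) (e y))) A ∂(Measure.comap e μ)
        = ∫⁻ x : H, (fun x' : K => ∫⁻ y in H, p x' y (e '' A) ∂ν) (e x) ∂(Measure.comap e μ) :=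
          lintegral_congr step1
      _ = ∫⁻ x in H, ∫⁻ y in H, p x y (e '' A) ∂ν ∂μ := cvt μ _ (hpmA _ hAk)
  -- full convolution restricted to H in the outer integral
  have hμfull : ∀ f : K → ℝ≥0∞, ∫⁻ x, f x ∂μ = ∫⁻ x in H, f x ∂μ := by
    intro f
    have h0 : μ.restrict Hᶜ = 0 := Measure.restrict_eq_zero.2 hμH
    rw [← lintegral_add_compl f hH, h0, lintegral_zero_measure, add_zero]
  -- abbreviations
  set t : K → ℝ≥0∞ := fun x => ν ({z : K | 0 < p x z H} ∩ Hᶜ) with ht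
  have htmeas : Measurable t := by
    have hs : MeasurableSet {q : K × K | 0 < p q.1 q.2 H ∧ q.2 ∈ Hᶜ} := by
      have h1 : MeasurableSet {q : K × K | 0 < p q.1 q.2 H} :=
        measurableSet_lt measurable_const (hpm H hH)
      exact h1.inter (measurable_snd hH.compl)
    have h2 := measurable_measure_prodMk_left (ν := ν) hs
    have heq : t = fun x => ν (Prod.mk x ⁻¹' {q : K × K | 0 < p q.1 q.2 H ∧ q.2 ∈ Hᶜ}) := by
      funext x
      show ν ({z : K | 0 < p x z H} ∩ Hᶜ) = _
      congr 1
    rw [heq]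
    exact h2
  have htle : ∀ x, t x ≤ ν Set.univ := fun x => measure_mono (Set.subset_univ _)
  -- the key estimates, for a generic measurable A
  have key : ∀ (A : Set H), MeasurableSet A →
      convH p H (Measure.comap e μ) (Measure.comap e ν) A
        ≤ Measure.comap e (conv p μ ν) A ∧
      Measure.comap e (conv p μ ν) A
        ≤ convH p H (Measure.comap e μ) (Measure.comap e ν) A + ∫⁻ x in H, t x ∂μ := by
    intro A hA
    have hAk : MeasurableSet (e '' A) := emb.measurableSet_image' hA
    have hAkH : e '' A ⊆ H := by
      rintro _ ⟨w, _, rfl⟩; exact w.2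
    have hL : Measure.comap e (conv p μ ν) A = ∫⁻ x in H, ∫⁻ y, p x y (e '' A) ∂ν ∂μ := by
      rw [emb.comap_apply, hconv _ hAk, hμfull]
    have hR := hconvH A hA
    constructor
    · rw [hL, hR]
      exact lintegral_mono fun x => setLIntegral_le_lintegral _ _
    · rw [hL, hR]
      have split : ∀ x : K, ∫⁻ y, p x y (e '' A) ∂ν
          = ∫⁻ y in H, p x y (e '' A) ∂ν + ∫⁻ y in Hᶜ, p x y (e '' A) ∂ν :=
        fun x => (lintegral_add_compl _ hH).symm
      have hbound : ∀ x : K, ∫⁻ y in Hᶜ, p x y (e '' A) ∂ν ≤ t x := by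
        intro x
        have hle : ∀ y : K, p x y (e '' A)
            ≤ Set.indicator {z : K | 0 < p x z H} (fun _ => 1) y := by
          intro y
          by_cases hy : 0 < p x y H
          · have : p x y (e '' A) ≤ 1 := prob_le_one
            simpa [Set.indicator_of_mem, hy] using this
          · have h0 : p x y H = 0 := by
              by_contra h
              exact hy (pos_iff_ne_zero.2 h)
            have : p x y (e '' A) ≤ p x y H := measure_mono hAkH
            simp [Set.indicator_of_notMem, hy, le_antisymm (this.trans h0.le) zero_le']
        calc ∫⁻ y in Hᶜ, p x y (e '' A) ∂ν
            ≤ ∫⁻ y in Hᶜ, Set.indicator {z : K | 0 < p x z H} (fun _ => 1) y ∂ν :=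
              lintegral_mono fun y => hle y
          _ = ν ({z : K | 0 < p x z H} ∩ Hᶜ) := by
              rw [lintegral_indicator (htilde x) _, Measure.restrict_restrict (htilde x),
                setLIntegral_one]
          _ = t x := rfl
      calc ∫⁻ x in H, ∫⁻ y, p x y (e '' A) ∂ν ∂μ
          = ∫⁻ x in H, (∫⁻ y in H, p x y (e '' A) ∂ν + ∫⁻ y in Hᶜ, p x y (e '' A) ∂ν) ∂μ :=
            lintegral_congr fun x => split x
        _ = ∫⁻ x in H, ∫⁻ y in H, p x y (e '' A) ∂ν ∂μ
            + ∫⁻ x in H, ∫⁻ y in Hᶜ, p x y (e '' A) ∂ν ∂μ :=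
            lintegral_add_left ((hpmA _ hAk).mono (le_refl _) le_rfl) _
        _ ≤ ∫⁻ x in H, ∫⁻ y in H, p x y (e '' A) ∂ν ∂μ + ∫⁻ x in H, t x ∂μ := by
            gcongr with x
            exact hbound x
  -- finiteness
  have hfin : ∀ (A : Set H), Measure.comap e (conv p μ ν) A < ⊤ := by
    intro A
    rw [emb.comap_apply]
    have : conv p μ ν Set.univ < ⊤ := by
      rw [hconv _ MeasurableSet.univ]
      calc ∫⁻ x, ∫⁻ y, p x y Set.univ ∂ν ∂μ = ∫⁻ _, ν Set.univ ∂μ := by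
            refine lintegral_congr fun x => ?_
            simp [measure_univ]
        _ = ν Set.univ * μ Set.univ := by rw [lintegral_const]
        _ < ⊤ := ENNReal.mul_lt_top (measure_lt_top _ _) (measure_lt_top _ _)
    exact lt_of_le_of_lt (measure_mono (Set.subset_univ _)) this
  have hDfin : ∫⁻ x in H, t x ∂μ < ⊤ := by
    calc ∫⁻ x in H, t x ∂μ ≤ ∫⁻ _ in H, ν Set.univ ∂μ := lintegral_mono fun x => htle x
      _ = ν Set.univ * (μ.restrict H) Set.univ := lintegral_const _
      _ < ⊤ := ENNReal.mul_lt_top (measure_lt_top _ _) (measure_lt_top _ _)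
  -- rewrite the RHS as toReal of a lintegral
  have hRHS : ∫ y in H, (ν ({z : K | 0 < p y z H} ∩ Hᶜ)).toReal ∂μ
      = (∫⁻ x in H, t x ∂μ).toReal := by
    rw [← integral_toReal (htmeas.aemeasurable.restrict)
      (Filter.Eventually.of_forall fun x => lt_of_le_of_lt (htle x) (measure_lt_top _ _))]
  rw [hRHS]
  obtain ⟨hC1, hC2⟩ := key C hC
  obtain ⟨hB1, hB2⟩ := key B hB
  set LB := Measure.comap e (conv p μ ν) B
  set RB := convH p H (Measure.comap e μ) (Measure.comap e ν) B
  set LC := Measure.comap e (conv p μ ν) C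
  set RC := convH p H (Measure.comap e μ) (Measure.comap e ν) C
  set D := ∫⁻ x in H, t x ∂μ
  have hLB : LB ≠ ⊤ := (hfin B).ne
  have hLC : LC ≠ ⊤ := (hfin C).ne
  have hRB : RB ≠ ⊤ := (lt_of_le_of_lt hB1 (hfin B)).ne
  have hRC : RC ≠ ⊤ := (lt_of_le_of_lt hC1 (hfin C)).ne
  have hD : D ≠ ⊤ := hDfin.ne
  have h1 : RC.toReal ≤ LC.toReal := ENNReal.toReal_mono hLC hC1
  have h2 : LB.toReal ≤ RB.toReal + D.toReal := by
    have := ENNReal.toReal_mono (by finiteness) hB2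
    rwa [ENNReal.toReal_add hRB hD] at this
  linarith
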